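/- Under the Setup below, suppose additionally that n-1 is coprime to both x and a. Let k, ℓ ∈ ℤ and let 1 ≤ i, j ≤ n-2 with i ∈ F_k and j ∈ F_{k+ℓ}. Then i ≺ j in P(λ) if and only if the following three inequalities hold: (i) r_i < r_j; (ii) (v-1)p_i + q_i > (v-1)p_j + q_j; (iii) (xv-1)(p_j - p_i) - a·x·(q_j - q_i) - a·(r_j - r_i) > ℓ(n-1) (equivalently, f(i) > f(j) + ℓ(n-1)). That is, i ≺ j iff the vector (p_j - p_i, q_j - q_i, r_j - r_i) lies in the open polyhedral region { x ∈ ℝ^3 : C x > (ℓ(n-1), 0, 0)^T } for the matrix C with rows (xv-1, -ax, -a), (1-v, -1, 0), (0, 0, 1). -/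
import Mathlib


/-- The lattice point `p(b)` of the fundamental parallelepiped `Π_λ`:
`p(b) = ((Σ_t ⌈bλ_t/(n-1)⌉) - b, ⌈bλ_1/(n-1)⌉, …, ⌈bλ_d/(n-1)⌉) ∈ ℤ^{d+1}`. -/
def pfun (d n : ℕ) (lam : Fin d → ℕ) (b : ℤ) : Fin (d + 1) → ℤ :=
  Fin.cons ((∑ t, ⌈(b * lam t : ℚ) / ((n : ℚ) - 1)⌉) - b)
    (fun t => ⌈(b * lam t : ℚ) / ((n : ℚ) - 1)⌉)

/-- The relation `i ≺ j` of the fundamental parallelepiped poset `P(λ)` on `{0, …, n-2}`: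
`i ≺ j` iff there exists `0 < ℓ < n-1` with `p(i) + p(ℓ) = p(j)`. -/
def precRel (d n : ℕ) (lam : Fin d → ℕ) (i j : ℤ) : Prop :=
  ∃ l : ℤ, 0 < l ∧ l < (n : ℤ) - 1 ∧ pfun d n lam i + pfun d n lam l = pfun d n lam j



lemma ceil_int_div (N m : ℤ) (hN : 0 < N) (h : ¬ (N ∣ m)) :
    ⌈(m : ℚ) / (N : ℚ)⌉ = m / N + 1 := by
  have hr0 : 0 ≤ m % N := Int.emod_nonneg m hN.ne'
  have hr1 : m % N < N := Int.emod_lt_of_pos m hN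
  have hrne : m % N ≠ 0 := fun hc => h (Int.dvd_iff_emod_eq_zero.mpr hc)
  have hdef : m % N = m - N * (m / N) := Int.emod_def m N
  have hNq : (0:ℚ) < (N:ℚ) := by exact_mod_cast hN
  rw [Int.ceil_eq_iff]
  constructor
  · rw [lt_div_iff₀ hNq]
    push_cast
    have : N * (m / N) < m := by omega
    exact_mod_cast by nlinarith [this]
  · rw [div_le_iff₀ hNq]
    have : m ≤ (m / N + 1) * N := by nlinarith [hr1, hdef]
    exact_mod_cast this

lemma carry_iff (N p q : ℤ) (hN : 0 < N) :
    (p / N + 1) + (q / N + 1) = (p + q) / N + 1 ↔ (p + q) % N < p % N := by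
  have hp := Int.emod_add_mul_ediv p N
  have hq := Int.emod_add_mul_ediv q N
  have hs := Int.emod_add_mul_ediv (p + q) N
  have h1 : 0 ≤ p % N := Int.emod_nonneg p hN.ne'
  have h2 : p % N < N := Int.emod_lt_of_pos p hN
  have h3 : 0 ≤ q % N := Int.emod_nonneg q hN.ne'
  have h4 : q % N < N := Int.emod_lt_of_pos q hN
  have h5 : 0 ≤ (p + q) % N := Int.emod_nonneg _ hN.ne'
  have h6 : (p + q) % N < N := Int.emod_lt_of_pos _ hN
  set e := (p + q) / N - p / N - q / N with hedef
  have he : p % N + q % N - (p + q) % N = N * e := by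
    rw [hedef]; ring_nf; nlinarith [hp, hq, hs]
  have he0 : e = 0 ∨ e = 1 := by
    have hlt : N * e < N * 2 := by nlinarith
    have hgt : N * (-1) < N * e := by nlinarith
    have := (mul_lt_mul_iff_right₀ hN).mp hlt
    have := (mul_lt_mul_iff_right₀ hN).mp hgt
    omega
  rcases he0 with h | h <;> rw [h] at he <;> simp at he <;> omega

lemma lex_iff (M X ri si rj sj : ℤ) (hM : 0 < M) (hX : 0 < X)
    (h1 : 0 ≤ ri) (h2 : ri < X) (h3 : 0 ≤ rj) (h4 : rj < X)
    (h5 : 0 ≤ si) (h6 : si < M) (h7 : 0 ≤ sj) (h8 : sj < M) :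
    (M * ri + si < M * rj + sj ∧ rj + X * sj < ri + X * si) ↔ (ri < rj ∧ sj < si) := by
  constructor
  · rintro ⟨ha, hb⟩
    have hr : ri < rj := by
      by_contra hcon
      push_neg at hcon
      have hmm : M * rj ≤ M * ri := mul_le_mul_of_nonneg_left hcon hM.le
      have hs : si < sj := by linarith
      have hxx : X * (si + 1) ≤ X * sj := mul_le_mul_of_nonneg_left (by omega) hX.le
      linarith
    have hs : sj < si := by
      by_contra hcon
      push_neg at hcon
      have hxx : X * si ≤ X * sj := mul_le_mul_of_nonneg_left hcon hX.le
      linarith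
    exact ⟨hr, hs⟩
  · rintro ⟨hr, hs⟩
    constructor
    · have hmm : M * (ri + 1) ≤ M * rj := mul_le_mul_of_nonneg_left (by omega) hM.le
      linarith
    · have hxx : X * (sj + 1) ≤ X * si := mul_le_mul_of_nonneg_left (by omega) hX.le
      linarith

lemma precRel_iff (d n : ℕ) (lam : Fin d → ℕ) (i j : ℤ) :
    precRel d n lam i j ↔ (0 < j - i ∧ j - i < (n : ℤ) - 1 ∧ ∀ t : Fin d,
      ⌈(i : ℚ) * (lam t : ℚ) / ((n : ℚ) - 1)⌉
        + ⌈((j : ℚ) - (i : ℚ)) * (lam t : ℚ) / ((n : ℚ) - 1)⌉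
        = ⌈(j : ℚ) * (lam t : ℚ) / ((n : ℚ) - 1)⌉) := by
  constructor
  · rintro ⟨l, h0, h1, heq⟩
    have hpt : ∀ t : Fin d, ⌈(i : ℚ) * (lam t : ℚ) / ((n : ℚ) - 1)⌉
        + ⌈(l : ℚ) * (lam t : ℚ) / ((n : ℚ) - 1)⌉
        = ⌈(j : ℚ) * (lam t : ℚ) / ((n : ℚ) - 1)⌉ := by
      intro t
      have := congrFun heq t.succ
      simpa [pfun, Pi.add_apply, Fin.cons_succ] using this
    have hsum : (∑ t, ⌈(i : ℚ) * (lam t : ℚ) / ((n : ℚ) - 1)⌉)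
        + (∑ t, ⌈(l : ℚ) * (lam t : ℚ) / ((n : ℚ) - 1)⌉)
        = ∑ t, ⌈(j : ℚ) * (lam t : ℚ) / ((n : ℚ) - 1)⌉ := by
      rw [← Finset.sum_add_distrib]
      exact Finset.sum_congr rfl fun t _ => hpt t
    have h0c := congrFun heq 0
    simp only [pfun, Pi.add_apply, Fin.cons_zero] at h0c
    have hl : l = j - i := by linarith
    refine ⟨by omega, by omega, ?_⟩
    intro t
    have h := hpt t
    rw [hl] at h
    push_cast at h
    exact h
  · rintro ⟨h0, h1, hpt⟩
    refine ⟨j - i, h0, h1, ?_⟩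
    have hpt' : ∀ t : Fin d, ⌈(i : ℚ) * (lam t : ℚ) / ((n : ℚ) - 1)⌉
        + ⌈((j - i : ℤ) : ℚ) * (lam t : ℚ) / ((n : ℚ) - 1)⌉
        = ⌈(j : ℚ) * (lam t : ℚ) / ((n : ℚ) - 1)⌉ := by
      intro t; have h := hpt t; push_cast; exact h
    funext s
    rw [Pi.add_apply]
    refine Fin.cases ?_ ?_ s
    · simp only [pfun, Fin.cons_zero]
      have hsum : (∑ t, ⌈(i : ℚ) * (lam t : ℚ) / ((n : ℚ) - 1)⌉)
          + (∑ t, ⌈((j - i : ℤ) : ℚ) * (lam t : ℚ) / ((n : ℚ) - 1)⌉)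
          = ∑ t, ⌈(j : ℚ) * (lam t : ℚ) / ((n : ℚ) - 1)⌉ := by
        rw [← Finset.sum_add_distrib]
        exact Finset.sum_congr rfl fun t _ => hpt' t
      push_cast at hsum ⊢
      linarith
    · intro t
      simp only [pfun, Fin.cons_succ]
      have := hpt' t
      push_cast at this ⊢
      linarith


set_option maxHeartbeats 2000000 in
/-- Setup as in Statement 12, additionally assuming `n-1` coprime to both
`x` and `a`: let `i ∈ F_k` and `j ∈ F_{k+ℓ}` with `1 ≤ i, j ≤ n-2`. Then `i ≺ j` in
`P(λ)` if and only if (i) `r_i < r_j`, (ii) `(v-1)p_i + q_i > (v-1)p_j + q_j`, and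
(iii) `(xv-1)(p_j-p_i) - ax(q_j-q_i) - a(r_j-r_i) > ℓ(n-1)` (equivalently
`f(i) > f(j) + ℓ(n-1)`); i.e. iff `(p_j-p_i, q_j-q_i, r_j-r_i)` lies in the open cone
`Cx > (ℓ(n-1),0,0)ᵀ` for `C` with rows `(xv-1,-ax,-a)`, `(1-v,-1,0)`, `(0,0,1)`. -/
theorem stmt_14 (a x u v : ℕ) (ha : 3 ≤ a) (hax : a ≤ x)
    (hu : u ≤ a - 3) (hv1 : u + 2 ≤ v) (hv2 : v ≤ a - 1) (hv3 : v * x ≤ a * (x - 1))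
    (n : ℕ) (hn : n = x * ((a + 1) * (v - 1) + 1))
    (hcopx : Nat.Coprime x (n - 1)) (hcopa : Nat.Coprime a (n - 1))
    (k l : ℤ)
    (i : ℤ) (hi1 : 1 ≤ i) (hi2 : i ≤ (n : ℤ) - 2)
    (j : ℤ) (hj1 : 1 ≤ j) (hj2 : j ≤ (n : ℤ) - 2)
    (ri pi qi : ℤ)
    (hdi : i = ((n : ℤ) / x) * ri + ((v : ℤ) - 1) * pi + qi)
    (hri : 0 ≤ ri ∧ ri < (x : ℤ))
    (hpqi : 0 ≤ ((v : ℤ) - 1) * pi + qi ∧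
      ((v : ℤ) - 1) * pi + qi < ((a : ℤ) + 1) * ((v : ℤ) - 1) + 1)
    (hpi : 0 ≤ pi ∧ pi ≤ (a : ℤ) + 1) (hqi : 0 ≤ qi ∧ qi < (v : ℤ) - 1 ∨ qi = 0)
    (hpai : pi = (a : ℤ) + 1 → qi = 0)
    (rj pj qj : ℤ)
    (hdj : j = ((n : ℤ) / x) * rj + ((v : ℤ) - 1) * pj + qj)
    (hrj : 0 ≤ rj ∧ rj < (x : ℤ))
    (hpqj : 0 ≤ ((v : ℤ) - 1) * pj + qj ∧
      ((v : ℤ) - 1) * pj + qj < ((a : ℤ) + 1) * ((v : ℤ) - 1) + 1)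
    (hpj : 0 ≤ pj ∧ pj ≤ (a : ℤ) + 1) (hqj : 0 ≤ qj ∧ qj < (v : ℤ) - 1 ∨ qj = 0)
    (hpaj : pj = (a : ℤ) + 1 → qj = 0)
    (hik : k = -(((a : ℤ) * ri - ((x : ℤ) * v - 1) * pi + (x : ℤ) * a * qi)
      / ((n : ℤ) - 1)))
    (hjk : k + l = -(((a : ℤ) * rj - ((x : ℤ) * v - 1) * pj + (x : ℤ) * a * qj)
      / ((n : ℤ) - 1))) :
    precRel (u * a + v + (v - (u + 1))) n
        (fun t => if (t : ℕ) < u * a + v then x else a * x) i j ↔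
      (ri < rj ∧
        ((v : ℤ) - 1) * pj + qj < ((v : ℤ) - 1) * pi + qi ∧
        ((x : ℤ) * v - 1) * (pj - pi) - (a : ℤ) * x * (qj - qi) - (a : ℤ) * (rj - ri) >
          l * ((n : ℤ) - 1)) := by
  obtain ⟨hri0, hri1⟩ := hri
  obtain ⟨hrj0, hrj1⟩ := hrj
  obtain ⟨hsi0, hsi1⟩ := hpqi
  obtain ⟨hsj0, hsj1⟩ := hpqj
  have hA : (3:ℤ) ≤ (a:ℤ) := by exact_mod_cast ha
  have hX3 : (3:ℤ) ≤ (x:ℤ) := by exact_mod_cast le_trans ha hax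
  have hV : (2:ℤ) ≤ (v:ℤ) := by exact_mod_cast (by omega : 2 ≤ v)
  have hvn : 1 ≤ v := by omega
  have hnZ : (n:ℤ) = (x:ℤ) * (((a:ℤ) + 1) * ((v:ℤ) - 1) + 1) := by
    subst hn; push_cast [Nat.cast_sub hvn]; ring
  have hprod : (4:ℤ) ≤ ((a:ℤ) + 1) * ((v:ℤ) - 1) := by nlinarith
  have h15 : (15:ℤ) ≤ (x:ℤ) * (((a:ℤ) + 1) * ((v:ℤ) - 1) + 1) := by
    have h5 : (5:ℤ) ≤ ((a:ℤ) + 1) * ((v:ℤ) - 1) + 1 := by linarith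
    have := mul_le_mul hX3 h5 (by norm_num : (0:ℤ) ≤ 5) (by linarith : (0:ℤ) ≤ (x:ℤ))
    linarith
  obtain ⟨N, hNdef⟩ : ∃ N : ℤ, N = (n:ℤ) - 1 := ⟨_, rfl⟩
  rw [← hNdef] at hik hjk
  rw [← hNdef]
  have hN0 : 0 < N := by
    rw [hNdef, hnZ]; linarith
  have hNX : (x:ℤ) * (((a:ℤ) + 1) * ((v:ℤ) - 1) + 1) = N + 1 := by
    rw [hNdef]; linear_combination -hnZ
  have hM : (n:ℤ) / (x:ℤ) = ((a:ℤ) + 1) * ((v:ℤ) - 1) + 1 := by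
    rw [hnZ]; exact Int.mul_ediv_cancel_left _ (by omega)
  rw [hM] at hdi hdj
  have hn2 : 2 ≤ n := by omega
  have hcast1 : ((n - 1 : ℕ) : ℤ) = N := by omega
  have hcX : IsCoprime N ((x:ℕ) : ℤ) := by
    rw [← hcast1]; exact Nat.isCoprime_iff_coprime.mpr hcopx.symm
  have hcA : IsCoprime N ((a:ℕ) : ℤ) := by
    rw [← hcast1]; exact Nat.isCoprime_iff_coprime.mpr hcopa.symm
  have hcAX : IsCoprime N (((a * x : ℕ)) : ℤ) := by
    push_cast; exact hcA.mul_right hcX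
  have hcastax : ((a * x : ℕ) : ℤ) = (a:ℤ) * (x:ℤ) := by push_cast; ring
  -- mod-x computation
  have hmodx : ∀ (b r p q : ℤ), b = (((a:ℤ) + 1) * ((v:ℤ) - 1) + 1) * r + ((v:ℤ) - 1) * p + q →
      0 ≤ r → r < (x:ℤ) → 0 ≤ ((v:ℤ) - 1) * p + q →
      ((v:ℤ) - 1) * p + q < ((a:ℤ) + 1) * ((v:ℤ) - 1) + 1 →
      1 ≤ b → b ≤ N - 1 →
      (b * (x:ℤ)) % N = r + (x:ℤ) * (((v:ℤ) - 1) * p + q) := by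
    intro b r p q hb h1 h2 h3 h4 hb1 hb2
    have he : b * (x:ℤ) = (r + (x:ℤ) * (((v:ℤ) - 1) * p + q)) + N * r := by
      linear_combination (x:ℤ) * hb + r * hNX
    have hc0 : 0 ≤ r + (x:ℤ) * (((v:ℤ) - 1) * p + q) := by
      have := mul_nonneg (by linarith : (0:ℤ) ≤ (x:ℤ)) h3
      linarith
    have hc1 : r + (x:ℤ) * (((v:ℤ) - 1) * p + q) ≤ N := by
      have hh := mul_le_mul_of_nonneg_left (by linarith : ((v:ℤ) - 1) * p + q ≤ ((a:ℤ) + 1) * ((v:ℤ) - 1)) (by linarith : (0:ℤ) ≤ (x:ℤ))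
      linarith [hNX, hh]
    have hlt : r + (x:ℤ) * (((v:ℤ) - 1) * p + q) < N := by
      rcases eq_or_lt_of_le hc1 with hEq | h
      · exfalso
        have hdvd : N ∣ b * (x:ℤ) := ⟨r + 1, by linear_combination he + hEq⟩
        have hd2 : N ∣ b := hcX.dvd_of_dvd_mul_right hdvd
        have := Int.le_of_dvd (by omega) hd2
        omega
      · exact h
    rw [he, Int.add_mul_emod_self_left, Int.emod_eq_of_lt hc0 hlt]
  have hmix := hmodx i ri pi qi hdi hri0 hri1 hsi0 hsi1 hi1 (by omega)
  have hmjx := hmodx j rj pj qj hdj hrj0 hrj1 hsj0 hsj1 hj1 (by omega)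
  -- mod-ax computation
  have hmodax : ∀ (b r p q : ℤ), b = (((a:ℤ) + 1) * ((v:ℤ) - 1) + 1) * r + ((v:ℤ) - 1) * p + q →
      (b * ((a:ℤ) * (x:ℤ))) % N
        = ((a:ℤ) * r - ((x:ℤ) * v - 1) * p + (x:ℤ) * a * q) % N := by
    intro b r p q hb
    have he : b * ((a:ℤ) * (x:ℤ))
        = ((a:ℤ) * r - ((x:ℤ) * v - 1) * p + (x:ℤ) * a * q) + N * ((a:ℤ) * r + p) := by
      linear_combination ((a:ℤ) * (x:ℤ)) * hb + ((a:ℤ) * r + p) * hNX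
    rw [he, Int.add_mul_emod_self_left]
  have hfik : ((a:ℤ) * ri - ((x:ℤ) * v - 1) * pi + (x:ℤ) * a * qi) % N
      = ((a:ℤ) * ri - ((x:ℤ) * v - 1) * pi + (x:ℤ) * a * qi) + N * k := by
    rw [Int.emod_def, show ((a:ℤ) * ri - ((x:ℤ) * v - 1) * pi + (x:ℤ) * a * qi) / N = -k by linarith]
    ring
  have hfjk : ((a:ℤ) * rj - ((x:ℤ) * v - 1) * pj + (x:ℤ) * a * qj) % N
      = ((a:ℤ) * rj - ((x:ℤ) * v - 1) * pj + (x:ℤ) * a * qj) + N * (k + l) := by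
    rw [Int.emod_def, show ((a:ℤ) * rj - ((x:ℤ) * v - 1) * pj + (x:ℤ) * a * qj) / N = -(k + l) by linarith]
    ring
  have hmiax : (i * ((a:ℤ) * (x:ℤ))) % N
      = ((a:ℤ) * ri - ((x:ℤ) * v - 1) * pi + (x:ℤ) * a * qi) + N * k := by
    rw [hmodax i ri pi qi hdi, hfik]
  have hmjax : (j * ((a:ℤ) * (x:ℤ))) % N
      = ((a:ℤ) * rj - ((x:ℤ) * v - 1) * pj + (x:ℤ) * a * qj) + N * (k + l) := by
    rw [hmodax j rj pj qj hdj, hfjk]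
  -- the per-coordinate key lemma
  have key : ∀ (m : ℕ), IsCoprime N ((m:ℕ) : ℤ) → ∀ b1 b2 : ℤ, 0 < b1 → b1 < b2 → b2 < N →
      ((⌈(b1 : ℚ) * (m : ℚ) / ((n : ℚ) - 1)⌉
        + ⌈((b2 : ℚ) - (b1 : ℚ)) * (m : ℚ) / ((n : ℚ) - 1)⌉
        = ⌈(b2 : ℚ) * (m : ℚ) / ((n : ℚ) - 1)⌉)
        ↔ (b2 * (m : ℤ)) % N < (b1 * (m : ℤ)) % N) := by
    intro m hc b1 b2 h1 h2 h3
    have hQ : ∀ c : ℤ, (c : ℚ) * (m : ℚ) / ((n : ℚ) - 1) = ((c * (m : ℤ) : ℤ) : ℚ) / ((N : ℤ) : ℚ) := by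
      intro c; rw [hNdef]; push_cast; ring
    have hQ2 : ((b2 : ℚ) - (b1 : ℚ)) * (m : ℚ) / ((n : ℚ) - 1)
        = (((b2 - b1) * (m : ℤ) : ℤ) : ℚ) / ((N : ℤ) : ℚ) := by
      rw [hNdef]; push_cast; ring
    have nd : ∀ c : ℤ, 0 < c → c < N → ¬ (N ∣ c * (m : ℤ)) := by
      intro c hc1 hc2 hdvd
      have h := hc.dvd_of_dvd_mul_right hdvd
      have := Int.le_of_dvd hc1 h
      omega
    rw [hQ b1, hQ b2, hQ2,
      ceil_int_div N _ hN0 (nd b1 h1 (by omega)),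
      ceil_int_div N _ hN0 (nd (b2 - b1) (by omega) (by omega)),
      ceil_int_div N _ hN0 (nd b2 (by omega) h3)]
    have h := carry_iff N (b1 * (m : ℤ)) ((b2 - b1) * (m : ℤ)) hN0
    rw [show b1 * (m : ℤ) + (b2 - b1) * (m : ℤ) = b2 * (m : ℤ) by ring] at h
    exact h
  -- dimension facts
  have hD0 : 0 < u * a + v + (v - (u + 1)) := by omega
  have hD2 : u * a + v < u * a + v + (v - (u + 1)) := by omega
  have hd1 : (0:ℕ) < u * a + v := by omega
  -- lex lemma instance
  have hlex := lex_iff (((a:ℤ) + 1) * ((v:ℤ) - 1) + 1) (x:ℤ) ri (((v:ℤ) - 1) * pi + qi)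
    rj (((v:ℤ) - 1) * pj + qj) (by linarith) (by omega)
    hri0 hri1 hrj0 hrj1 hsi0 hsi1 hsj0 hsj1
  have hii : i = (((a:ℤ) + 1) * ((v:ℤ) - 1) + 1) * ri + (((v:ℤ) - 1) * pi + qi) := by
    linarith [hdi]
  have hjj : j = (((a:ℤ) + 1) * ((v:ℤ) - 1) + 1) * rj + (((v:ℤ) - 1) * pj + qj) := by
    linarith [hdj]
  have hcond0 : ((⟨0, hD0⟩ : Fin (u * a + v + (v - (u + 1)))) : ℕ) < u * a + v := hd1
  have hcond1 : ¬ ((⟨u * a + v, hD2⟩ : Fin (u * a + v + (v - (u + 1)))) : ℕ) < u * a + v :=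
    Nat.lt_irrefl _
  rw [precRel_iff]
  constructor
  · rintro ⟨h0, h1, hall⟩
    have hij : i < j := by omega
    have h2 := hall ⟨0, hD0⟩
    rw [if_pos hcond0] at h2
    have h3 := hall ⟨u * a + v, hD2⟩
    rw [if_neg hcond1] at h3
    have hmx := (key x hcX i j (by omega) hij (by omega)).mp h2
    have hmax := (key (a * x) hcAX i j (by omega) hij (by omega)).mp h3
    rw [hmix, hmjx] at hmx
    rw [hcastax, hmiax, hmjax] at hmax
    obtain ⟨hr, hs⟩ := hlex.mp ⟨by linarith, by linarith⟩
    exact ⟨hr, hs, by linarith⟩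
  · rintro ⟨hr, hs, hiii⟩
    obtain ⟨hlt, hmxraw⟩ := hlex.mpr ⟨hr, hs⟩
    have hij : i < j := by linarith
    refine ⟨by omega, by omega, ?_⟩
    intro t
    by_cases hc : (t : ℕ) < u * a + v
    · rw [if_pos hc]
      refine (key x hcX i j (by omega) hij (by omega)).mpr ?_
      rw [hmix, hmjx]
      exact hmxraw
    · rw [if_neg hc]
      refine (key (a * x) hcAX i j (by omega) hij (by omega)).mpr ?_
      rw [hcastax, hmiax, hmjax]
      linarith
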